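/- Under a completely randomized assignment, for any two distinct treatments j ≠ j' in {1,…,J}, the covariance of the observed group means is Cov(p_j, p_{j'}) = −(1/(2N)) (S_j² + S_{j'}² − S²_{j−j'}). -/

import Mathlib

open Finset

/-- The finset of completely randomized assignments of `N` units to treatments in `J`
with group sizes `Nj`. -/
def assignments (N : ℕ) {J : Type*} [Fintype J] [DecidableEq J] (Nj : J → ℕ) :
    Finset (Fin N → J) :=
  Finset.univ.filter fun T => ∀ j, (Finset.univ.filter fun i => T i = j).card = Nj j

/-- Expectation with respect to the uniform distribution on completely randomized
assignments. -/
noncomputable def expect {N : ℕ} {J : Type*} [Fintype J] [DecidableEq J]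
    (Nj : J → ℕ) (f : (Fin N → J) → ℝ) : ℝ :=
  (∑ T ∈ assignments N Nj, f T) / ((assignments N Nj).card : ℝ)

/-- Variance with respect to the randomization distribution. -/
noncomputable def rvar {N : ℕ} {J : Type*} [Fintype J] [DecidableEq J]
    (Nj : J → ℕ) (f : (Fin N → J) → ℝ) : ℝ :=
  expect Nj fun T => (f T - expect Nj f) ^ 2

/-- Covariance with respect to the randomization distribution. -/
noncomputable def rcov {N : ℕ} {J : Type*} [Fintype J] [DecidableEq J]
    (Nj : J → ℕ) (f g : (Fin N → J) → ℝ) : ℝ :=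
  expect Nj fun T => (f T - expect Nj f) * (g T - expect Nj g)

/-- Observed group mean `p_j` of treatment `j` under assignment `T`. -/
noncomputable def pObs {N : ℕ} {J : Type*} [DecidableEq J]
    (Y : Fin N → J → ℝ) (Nj : J → ℕ) (j : J) (T : Fin N → J) : ℝ :=
  (∑ i ∈ Finset.univ.filter fun i => T i = j, Y i j) / (Nj j : ℝ)

/-- Population mean `P_j`. -/
noncomputable def Pmean {N : ℕ} {J : Type*} (Y : Fin N → J → ℝ) (j : J) : ℝ :=
  (∑ i, Y i j) / (N : ℝ)

/-- Population variance `S_j²`. -/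
noncomputable def S2 {N : ℕ} {J : Type*} (Y : Fin N → J → ℝ) (j : J) : ℝ :=
  (∑ i, (Y i j - Pmean Y j) ^ 2) / ((N : ℝ) - 1)

/-- Variance of unit-level differences `S²_{j-j'}`. -/
noncomputable def S2diff {N : ℕ} {J : Type*} (Y : Fin N → J → ℝ) (j j' : J) : ℝ :=
  (∑ i, (Y i j - Y i j' - (Pmean Y j - Pmean Y j')) ^ 2) / ((N : ℝ) - 1)

section Aux
variable {N J : ℕ} {Nj : Fin J → ℕ}

lemma comp_mem_assignments (σ : Equiv.Perm (Fin N)) {T : Fin N → Fin J}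
    (hT : T ∈ assignments N Nj) : T ∘ σ ∈ assignments N Nj := by
  simp only [assignments, mem_filter, mem_univ, true_and] at hT ⊢
  intro j
  rw [← hT j]
  have h : (univ.filter fun i => (T ∘ σ) i = j) =
      (univ.filter fun i => T i = j).map σ.symm.toEmbedding := by
    ext x
    simp [Equiv.symm_apply_eq]
  rw [h, Finset.card_map]

lemma sum_comp_perm (σ : Equiv.Perm (Fin N)) (f : (Fin N → Fin J) → ℝ) :
    ∑ T ∈ assignments N Nj, f (T ∘ σ) = ∑ T ∈ assignments N Nj, f T := by
  refine Finset.sum_nbij' (fun T => T ∘ σ) (fun T => T ∘ σ.symm) ?_ ?_ ?_ ?_ ?_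
  · intro T hT; exact comp_mem_assignments σ hT
  · intro T hT; exact comp_mem_assignments σ.symm hT
  · intro T hT; funext i; simp
  · intro T hT; funext i; simp
  · intro T hT; rfl

-- indicator sum shift: value of single-index indicator sum is independent of i
lemma c1_indep (i i' : Fin N) (j : Fin J) :
    ∑ T ∈ assignments N Nj, (if T i = j then (1:ℝ) else 0)
      = ∑ T ∈ assignments N Nj, (if T i' = j then (1:ℝ) else 0) := by
  have := sum_comp_perm (Nj := Nj) (Equiv.swap i i')
    (fun T => if T i' = j then (1:ℝ) else 0)
  simpa [Function.comp, Equiv.swap_apply_right] using this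

lemma c1_val (i : Fin N) (j : Fin J) :
    (N : ℝ) * ∑ T ∈ assignments N Nj, (if T i = j then (1:ℝ) else 0)
      = (Nj j : ℝ) * ((assignments N Nj).card : ℝ) := by
  have h1 : ∑ i' : Fin N, ∑ T ∈ assignments N Nj, (if T i' = j then (1:ℝ) else 0)
      = (N : ℝ) * ∑ T ∈ assignments N Nj, (if T i = j then (1:ℝ) else 0) := by
    rw [Finset.sum_congr rfl (fun i' _ => c1_indep i' i j)]
    simp [mul_comm]
  rw [← h1, Finset.sum_comm]
  have h2 : ∀ T ∈ assignments N Nj,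
      ∑ i' : Fin N, (if T i' = j then (1:ℝ) else 0) = (Nj j : ℝ) := by
    intro T hT
    simp only [assignments, mem_filter, mem_univ, true_and] at hT
    rw [Finset.sum_boole, hT j]
  rw [Finset.sum_congr rfl h2]
  simp [mul_comm]

lemma exists_perm_pair {i i' k k' : Fin N} (h1 : i ≠ i') (h2 : k ≠ k') :
    ∃ σ : Equiv.Perm (Fin N), σ k = i ∧ σ k' = i' := by
  classical
  set τ := Equiv.swap k i with hτ
  have hτk : τ k = i := Equiv.swap_apply_left k i
  set m := τ k' with hm
  have hmi : m ≠ i := by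
    intro h
    apply h2
    have h3 : τ k' = τ k := by rw [← hm, h, hτk]
    exact (τ.injective h3).symm
  set ρ := Equiv.swap m i' with hρ
  refine ⟨τ.trans ρ, ?_, ?_⟩
  · simp only [Equiv.trans_apply, hτk, hρ]
    exact Equiv.swap_apply_of_ne_of_ne hmi.symm h1
  · simp only [Equiv.trans_apply, ← hm, hρ]
    exact Equiv.swap_apply_left m i'

lemma c2_indep {i i' k k' : Fin N} (h1 : i ≠ i') (h2 : k ≠ k') (j j' : Fin J) :
    ∑ T ∈ assignments N Nj, ((if T i = j then (1:ℝ) else 0) * (if T i' = j' then (1:ℝ) else 0))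
      = ∑ T ∈ assignments N Nj, ((if T k = j then (1:ℝ) else 0) * (if T k' = j' then (1:ℝ) else 0)) := by
  obtain ⟨σ, hk, hk'⟩ := exists_perm_pair h1 h2
  have := sum_comp_perm (Nj := Nj) σ
    (fun T => (if T k = j then (1:ℝ) else 0) * (if T k' = j' then (1:ℝ) else 0))
  simp only [Function.comp, hk, hk'] at this
  exact this.symm ▸ rfl

lemma c2_val {i i' : Fin N} (hii : i ≠ i') {j j' : Fin J} (hjj : j ≠ j') :
    (N : ℝ) * ((N : ℝ) - 1) *
      ∑ T ∈ assignments N Nj, ((if T i = j then (1:ℝ) else 0) * (if T i' = j' then (1:ℝ) else 0))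
      = (Nj j : ℝ) * (Nj j' : ℝ) * ((assignments N Nj).card : ℝ) := by
  classical
  have hN1 : 1 ≤ N := Nat.one_le_iff_ne_zero.mpr (by rintro rfl; exact i.elim0)
  set c := ∑ T ∈ assignments N Nj,
      ((if T i = j then (1:ℝ) else 0) * (if T i' = j' then (1:ℝ) else 0)) with hc
  have key : ∑ k : Fin N, ∑ k' : Fin N, ∑ T ∈ assignments N Nj,
      ((if T k = j then (1:ℝ) else 0) * (if T k' = j' then (1:ℝ) else 0))
      = (N : ℝ) * (((N : ℝ) - 1) * c) := by
    have inner : ∀ k : Fin N, ∑ k' : Fin N, ∑ T ∈ assignments N Nj,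
        ((if T k = j then (1:ℝ) else 0) * (if T k' = j' then (1:ℝ) else 0))
        = ((N : ℝ) - 1) * c := by
      intro k
      have diag : ∑ T ∈ assignments N Nj,
          ((if T k = j then (1:ℝ) else 0) * (if T k = j' then (1:ℝ) else 0)) = 0 := by
        apply Finset.sum_eq_zero
        intro T _
        by_cases h : T k = j
        · simp [h]
          exact hjj
        · simp [h]
      have off : ∀ k' ∈ univ.erase k, ∑ T ∈ assignments N Nj,
          ((if T k = j then (1:ℝ) else 0) * (if T k' = j' then (1:ℝ) else 0)) = c := by
        intro k' hk'
        have hkk : k ≠ k' := fun h => (Finset.mem_erase.mp hk').1 h.symm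
        exact c2_indep hkk hii j j'
      rw [← Finset.add_sum_erase _ _ (Finset.mem_univ k), diag, zero_add,
        Finset.sum_congr rfl off, Finset.sum_const, Finset.card_erase_of_mem (Finset.mem_univ k)]
      simp only [Finset.card_univ, Fintype.card_fin, nsmul_eq_mul]
      rw [Nat.cast_sub hN1]
      simp
    rw [Finset.sum_congr rfl (fun k _ => inner k), Finset.sum_const]
    simp [mul_assoc]
  have key2 : ∑ T ∈ assignments N Nj, ∑ k : Fin N, ∑ k' : Fin N,
      ((if T k = j then (1:ℝ) else 0) * (if T k' = j' then (1:ℝ) else 0))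
      = (Nj j : ℝ) * (Nj j' : ℝ) * ((assignments N Nj).card : ℝ) := by
    have h2 : ∀ T ∈ assignments N Nj, ∑ k : Fin N, ∑ k' : Fin N,
        ((if T k = j then (1:ℝ) else 0) * (if T k' = j' then (1:ℝ) else 0))
        = (Nj j : ℝ) * (Nj j' : ℝ) := by
      intro T hT
      simp only [assignments, mem_filter, mem_univ, true_and] at hT
      rw [← Finset.sum_mul_sum, Finset.sum_boole, Finset.sum_boole, hT j, hT j']
    rw [Finset.sum_congr rfl h2, Finset.sum_const, nsmul_eq_mul, mul_comm]
  have key3 : ∑ k : Fin N, ∑ k' : Fin N, ∑ T ∈ assignments N Nj,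
      ((if T k = j then (1:ℝ) else 0) * (if T k' = j' then (1:ℝ) else 0))
      = ∑ T ∈ assignments N Nj, ∑ k : Fin N, ∑ k' : Fin N,
      ((if T k = j then (1:ℝ) else 0) * (if T k' = j' then (1:ℝ) else 0)) := by
    rw [Finset.sum_congr rfl (fun k _ => Finset.sum_comm), Finset.sum_comm]
  rw [← key2, ← key3, key, hc, ← mul_assoc]


lemma diag_zero {i : Fin N} {j j' : Fin J} (hjj : j ≠ j') :
    ∑ T ∈ assignments N Nj,
      ((if T i = j then (1:ℝ) else 0) * (if T i = j' then (1:ℝ) else 0)) = 0 := by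
  apply Finset.sum_eq_zero
  intro T _
  by_cases h : T i = j
  · simp [h]
    exact hjj
  · simp [h]

lemma assignments_nonempty (hsum : ∑ j, Nj j = N) : (assignments N Nj).Nonempty := by
  have hcard : Fintype.card (Σ j : Fin J, Fin (Nj j)) = Fintype.card (Fin N) := by
    simp [Fintype.card_sigma, hsum]
  let e : (Σ j : Fin J, Fin (Nj j)) ≃ Fin N := Fintype.equivOfCardEq hcard
  refine ⟨fun i => (e.symm i).1, ?_⟩
  simp only [assignments, mem_filter, mem_univ, true_and]
  intro j
  have h : (univ.filter fun i => (e.symm i).1 = j) =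
      (univ.filter fun s : Σ j, Fin (Nj j) => s.1 = j).map e.toEmbedding := by
    ext x
    simp [← Equiv.symm_apply_eq]
  rw [h, Finset.card_map]
  have h2 : (univ.filter fun s : Σ j, Fin (Nj j) => s.1 = j)
      = (({j} : Finset (Fin J)).sigma fun j => univ) := by
    ext ⟨a, b⟩; simp [eq_comm]
  rw [h2, Finset.card_sigma]
  simp

lemma pObs_eq (Y : Fin N → Fin J → ℝ) (j : Fin J) (T : Fin N → Fin J) :
    pObs Y Nj j T = (∑ i : Fin N, (if T i = j then (1:ℝ) else 0) * Y i j) / (Nj j : ℝ) := by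
  rw [pObs, Finset.sum_filter]
  congr 1
  apply Finset.sum_congr rfl
  intro i _
  split <;> simp

lemma sum_pObs (Y : Fin N → Fin J → ℝ) (hN : (N : ℝ) ≠ 0) (j : Fin J)
    (hj : (Nj j : ℝ) ≠ 0) :
    ∑ T ∈ assignments N Nj, pObs Y Nj j T
      = ((assignments N Nj).card : ℝ) * ((∑ i, Y i j) / (N : ℝ)) := by
  classical
  set M := ((assignments N Nj).card : ℝ) with hM
  have hs : ∀ i : Fin N, ∑ T ∈ assignments N Nj, (if T i = j then (1:ℝ) else 0)
      = (Nj j : ℝ) * M / (N : ℝ) := by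
    intro i
    rw [eq_div_iff hN, mul_comm _ ((N:ℝ))]
    exact c1_val i j
  calc ∑ T ∈ assignments N Nj, pObs Y Nj j T
      = ∑ T ∈ assignments N Nj,
          (∑ i : Fin N, (if T i = j then (1:ℝ) else 0) * Y i j) / (Nj j : ℝ) := by
        exact Finset.sum_congr rfl fun T _ => pObs_eq Y j T
    _ = (∑ T ∈ assignments N Nj,
          ∑ i : Fin N, (if T i = j then (1:ℝ) else 0) * Y i j) / (Nj j : ℝ) := by
        rw [Finset.sum_div]
    _ = (∑ i : Fin N, ∑ T ∈ assignments N Nj,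
          (if T i = j then (1:ℝ) else 0) * Y i j) / (Nj j : ℝ) := by
        rw [Finset.sum_comm]
    _ = (∑ i : Fin N, ((Nj j : ℝ) * M / (N : ℝ)) * Y i j) / (Nj j : ℝ) := by
        congr 1
        apply Finset.sum_congr rfl
        intro i _
        rw [← Finset.sum_mul, hs i]
    _ = M * ((∑ i, Y i j) / (N : ℝ)) := by
        rw [← Finset.mul_sum]
        field_simp

lemma sum_pObs_mul (Y : Fin N → Fin J → ℝ) (hN2 : 2 ≤ N) {j j' : Fin J} (hjj : j ≠ j')
    (hj : (Nj j : ℝ) ≠ 0) (hj' : (Nj j' : ℝ) ≠ 0) :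
    ∑ T ∈ assignments N Nj, pObs Y Nj j T * pObs Y Nj j' T
      = ((assignments N Nj).card : ℝ) *
          ((∑ i, Y i j) * (∑ i, Y i j') - ∑ i, Y i j * Y i j')
          / ((N : ℝ) * ((N : ℝ) - 1)) := by
  classical
  have hN : (N : ℝ) ≠ 0 := by positivity
  have hN1 : (N : ℝ) - 1 ≠ 0 := by
    have : (2 : ℝ) ≤ (N : ℝ) := by exact_mod_cast hN2
    nlinarith
  set M := ((assignments N Nj).card : ℝ) with hM
  set K := (Nj j : ℝ) * (Nj j' : ℝ) * M / ((N : ℝ) * ((N : ℝ) - 1)) with hK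
  have hs2 : ∀ i i' : Fin N, i ≠ i' →
      ∑ T ∈ assignments N Nj,
        ((if T i = j then (1:ℝ) else 0) * (if T i' = j' then (1:ℝ) else 0)) = K := by
    intro i i' hii
    rw [hK, eq_div_iff (mul_ne_zero hN hN1)]
    rw [mul_comm _ ((N:ℝ) * ((N:ℝ) - 1))]
    exact c2_val hii hjj
  calc ∑ T ∈ assignments N Nj, pObs Y Nj j T * pObs Y Nj j' T
      = ∑ T ∈ assignments N Nj, (∑ i : Fin N, ∑ i' : Fin N,
          ((if T i = j then (1:ℝ) else 0) * (if T i' = j' then (1:ℝ) else 0))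
            * (Y i j * Y i' j')) / ((Nj j : ℝ) * (Nj j' : ℝ)) := by
        apply Finset.sum_congr rfl
        intro T _
        rw [pObs_eq Y j T, pObs_eq Y j' T, div_mul_div_comm, Finset.sum_mul_sum]
        congr 1
        apply Finset.sum_congr rfl; intro i _
        apply Finset.sum_congr rfl; intro i' _
        ring
    _ = (∑ i : Fin N, ∑ i' : Fin N, (∑ T ∈ assignments N Nj,
          ((if T i = j then (1:ℝ) else 0) * (if T i' = j' then (1:ℝ) else 0)))
            * (Y i j * Y i' j')) / ((Nj j : ℝ) * (Nj j' : ℝ)) := by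
        rw [← Finset.sum_div]
        congr 1
        rw [Finset.sum_comm]
        apply Finset.sum_congr rfl
        intro i _
        rw [Finset.sum_comm]
        apply Finset.sum_congr rfl
        intro i' _
        rw [Finset.sum_mul]
    _ = (∑ i : Fin N, K * (Y i j * ((∑ i', Y i' j') - Y i j')))
          / ((Nj j : ℝ) * (Nj j' : ℝ)) := by
        congr 1
        apply Finset.sum_congr rfl
        intro i _
        rw [← Finset.add_sum_erase _ _ (Finset.mem_univ i), diag_zero hjj, zero_mul, zero_add]
        rw [Finset.sum_congr rfl (fun i' hi' =>
          by rw [hs2 i i' (fun h => (Finset.mem_erase.mp hi').1 h.symm)])]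
        rw [← Finset.mul_sum, ← Finset.mul_sum]
        rw [Finset.sum_erase_eq_sub (Finset.mem_univ i)]
    _ = M * ((∑ i, Y i j) * (∑ i, Y i j') - ∑ i, Y i j * Y i j')
          / ((N : ℝ) * ((N : ℝ) - 1)) := by
        rw [← Finset.mul_sum, hK]
        have expand : ∑ i : Fin N, Y i j * ((∑ i', Y i' j') - Y i j')
            = (∑ i, Y i j) * (∑ i, Y i j') - ∑ i, Y i j * Y i j' := by
          rw [Finset.sum_congr rfl (fun i _ => mul_sub (Y i j) _ _),
            Finset.sum_sub_distrib, ← Finset.sum_mul]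
        rw [expand]
        field_simp

lemma rcov_eq_sub (hM : ((assignments N Nj).card : ℝ) ≠ 0) (f g : (Fin N → Fin J) → ℝ) :
    rcov Nj f g = _root_.expect Nj (fun T => f T * g T)
      - _root_.expect Nj f * _root_.expect Nj g := by
  have expand : ∀ a b : ℝ, ∑ T ∈ assignments N Nj, (f T - a) * (g T - b)
      = (∑ T ∈ assignments N Nj, f T * g T) - a * (∑ T ∈ assignments N Nj, g T)
        - b * (∑ T ∈ assignments N Nj, f T)
        + ((assignments N Nj).card : ℝ) * (a * b) := by
    intro a b
    have h : ∀ T ∈ assignments N Nj,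
        (f T - a) * (g T - b) = f T * g T - a * g T - b * f T + a * b :=
      fun T _ => by ring
    rw [Finset.sum_congr rfl h, Finset.sum_add_distrib, Finset.sum_sub_distrib,
      Finset.sum_sub_distrib, ← Finset.mul_sum, ← Finset.mul_sum, Finset.sum_const,
      nsmul_eq_mul]
  simp only [rcov, _root_.expect]
  rw [expand]
  field_simp
  ring

end Aux

/-- Under a completely randomized assignment, for distinct treatments `j ≠ j'`,
`Cov(p_j, p_{j'}) = -(1/(2N)) (S_j² + S_{j'}² - S²_{j-j'})`. -/
theorem rcov_pObs {N J : ℕ} (hN : 2 ≤ N)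
    (Y : Fin N → Fin J → ℝ) (Nj : Fin J → ℕ)
    (hpos : ∀ j, 1 ≤ Nj j) (hsum : ∑ j, Nj j = N) :
    ∀ j j' : Fin J, j ≠ j' →
      rcov Nj (pObs Y Nj j) (pObs Y Nj j') =
        -(1 / (2 * (N : ℝ))) * (S2 Y j + S2 Y j' - S2diff Y j j') := by
  intro j j' hjj
  classical
  have hNr : (N : ℝ) ≠ 0 := by
    have : 0 < N := lt_of_lt_of_le (by norm_num) hN
    positivity
  have hN1 : (N : ℝ) - 1 ≠ 0 := by
    have : (2 : ℝ) ≤ (N : ℝ) := by exact_mod_cast hN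
    nlinarith
  have hj : (Nj j : ℝ) ≠ 0 := by
    have := hpos j; positivity
  have hj' : (Nj j' : ℝ) ≠ 0 := by
    have := hpos j'; positivity
  have hM : ((assignments N Nj).card : ℝ) ≠ 0 := by
    have := Finset.card_pos.mpr (assignments_nonempty hsum)
    positivity
  set M := ((assignments N Nj).card : ℝ) with hMdef
  set a := ∑ i, Y i j with hadef
  set b := ∑ i, Y i j' with hbdef
  set q := ∑ i, Y i j * Y i j' with hqdef
  have hEf : _root_.expect Nj (pObs Y Nj j) = a / (N : ℝ) := by
    simp only [_root_.expect]
    rw [sum_pObs Y hNr j hj]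
    exact mul_div_cancel_left₀ _ hM
  have hEg : _root_.expect Nj (pObs Y Nj j') = b / (N : ℝ) := by
    simp only [_root_.expect]
    rw [sum_pObs Y hNr j' hj']
    exact mul_div_cancel_left₀ _ hM
  have hEfg : _root_.expect Nj (fun T => pObs Y Nj j T * pObs Y Nj j' T)
      = (a * b - q) / ((N : ℝ) * ((N : ℝ) - 1)) := by
    simp only [_root_.expect]
    rw [sum_pObs_mul Y hN hjj hj hj', mul_div_assoc]
    exact mul_div_cancel_left₀ _ hM
  rw [rcov_eq_sub hM, hEfg, hEf, hEg]
  -- now the RHS algebra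
  have hPj : Pmean Y j = a / (N : ℝ) := rfl
  have hPj' : Pmean Y j' = b / (N : ℝ) := rfl
  have hcross : ∑ i, (Y i j - a / (N : ℝ)) * (Y i j' - b / (N : ℝ))
      = q - a * b / (N : ℝ) := by
    have h : ∀ i : Fin N, (Y i j - a / (N : ℝ)) * (Y i j' - b / (N : ℝ))
        = Y i j * Y i j' - (a / (N : ℝ)) * Y i j' - (b / (N : ℝ)) * Y i j
          + (a / (N : ℝ)) * (b / (N : ℝ)) := fun i => by ring
    rw [Finset.sum_congr rfl (fun i _ => h i), Finset.sum_add_distrib,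
      Finset.sum_sub_distrib, Finset.sum_sub_distrib, ← Finset.mul_sum, ← Finset.mul_sum,
      Finset.sum_const, Finset.card_univ, Fintype.card_fin, nsmul_eq_mul,
      ← hadef, ← hbdef, ← hqdef]
    field_simp
    ring
  have hS : S2 Y j + S2 Y j' - S2diff Y j j'
      = 2 * (q - a * b / (N : ℝ)) / ((N : ℝ) - 1) := by
    rw [S2, S2, S2diff, hPj, hPj', ← add_div, ← sub_div]
    rw [← hcross]
    congr 1
    rw [← Finset.sum_add_distrib, ← Finset.sum_sub_distrib, Finset.mul_sum]
    apply Finset.sum_congr rfl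
    intro i _
    ring
  rw [hS]
  field_simp
  ring
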